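/- Let P be a range-overlapping 0-1 matrix and k ≥ 1. Then for all m and n, ex(m, n, P) ≤ k·(ex_k(m, P) + n). -/

import Mathlib

/-- `A` contains the 0-1 pattern `P`. -/
def Contains {a b m n : ℕ} (P : Matrix (Fin a) (Fin b) Bool)
    (A : Matrix (Fin m) (Fin n) Bool) : Prop :=
  ∃ (ri : Fin a → Fin m) (ci : Fin b → Fin n),
    StrictMono ri ∧ StrictMono ci ∧
      ∀ i j, P i j = true → A (ri i) (ci j) = true

/-- Total number of ones in `A`. -/
def onesCount {m n : ℕ} (A : Matrix (Fin m) (Fin n) Bool) : ℕ :=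
  (Finset.univ.filter fun p : Fin m × Fin n => A p.1 p.2 = true).card

/-- Number of ones in column `j` of `A`. -/
def colOnes {m n : ℕ} (A : Matrix (Fin m) (Fin n) Bool) (j : Fin n) : ℕ :=
  (Finset.univ.filter fun i : Fin m => A i j = true).card

/-- `ex(m, n, P)`: maximum number of ones in an `m × n` 0-1 matrix avoiding `P`. -/
noncomputable def exWeight {a b : ℕ} (m n : ℕ) (P : Matrix (Fin a) (Fin b) Bool) : ℕ :=
  sSup {w : ℕ | ∃ A : Matrix (Fin m) (Fin n) Bool, ¬ Contains P A ∧ onesCount A = w}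

/-- `ex_k(m, P)` as a supremum in `ℕ∞`. -/
noncomputable def exCols {a b : ℕ} (k m : ℕ) (P : Matrix (Fin a) (Fin b) Bool) : ℕ∞ :=
  sSup {x : ℕ∞ | ∃ n : ℕ, x = (n : ℕ∞) ∧ ∃ A : Matrix (Fin m) (Fin n) Bool,
    ¬ Contains P A ∧ ∀ col, k ≤ colOnes A col}

/-- Row `i` lies in the range of column `j` of `P`, i.e. between the topmost and
bottommost ones of that column. -/
def InRange {a b : ℕ} (P : Matrix (Fin a) (Fin b) Bool) (j : Fin b) (i : Fin a) : Prop :=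
  (∃ i1, i1 ≤ i ∧ P i1 j = true) ∧ (∃ i2, i ≤ i2 ∧ P i2 j = true)

/-- `P` is range-overlapping: every pair of columns has a common row in both ranges. -/
def RangeOverlapping {a b : ℕ} (P : Matrix (Fin a) (Fin b) Bool) : Prop :=
  ∀ j j' : Fin b, ∃ i : Fin a, InRange P j i ∧ InRange P j' i

open Finset

lemma onesCount_eq_sum {m n : ℕ} (A : Matrix (Fin m) (Fin n) Bool) :
    onesCount A = ∑ j, colOnes A j := by
  classical
  unfold onesCount colOnes
  rw [Finset.card_filter]
  rw [Fintype.sum_prod_type_right]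
  congr 1
  ext j
  rw [Finset.card_filter]

lemma key {a b : ℕ} (P : Matrix (Fin a) (Fin b) Bool) (hP : RangeOverlapping P)
    (k : ℕ) (hk : 1 ≤ k) (m n : ℕ) (A : Matrix (Fin m) (Fin n) Bool)
    (hA : ¬ Contains P A) :
    ((onesCount A : ℕ∞)) ≤ (k : ℕ∞) * (exCols k m P + (n : ℕ∞)) := by
  classical
  set q : Fin n → ℕ := fun j => colOnes A j / k with hq
  set N : ℕ := ∑ j, q j with hN
  -- offsets
  set off : ℕ → ℕ := fun v => ∑ j ∈ Finset.univ.filter (fun j : Fin n => (j : ℕ) < v), q j with hoff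
  have hoff_le : ∀ (j : Fin n) (v : ℕ), (j : ℕ) < v → off (j : ℕ) + q j ≤ off v := by
    intro j v hjv
    have hsub : insert j (Finset.univ.filter (fun j' : Fin n => (j' : ℕ) < (j : ℕ)))
        ⊆ Finset.univ.filter (fun j' : Fin n => (j' : ℕ) < v) := by
      intro x hx
      simp only [Finset.mem_insert, Finset.mem_filter, Finset.mem_univ, true_and] at hx ⊢
      rcases hx with rfl | hx
      · exact hjv
      · exact hx.trans hjv
    have hnot : j ∉ Finset.univ.filter (fun j' : Fin n => (j' : ℕ) < (j : ℕ)) := by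
      simp
    calc off (j : ℕ) + q j = ∑ x ∈ insert j (Finset.univ.filter (fun j' : Fin n => (j' : ℕ) < (j : ℕ))), q x := by
          rw [Finset.sum_insert hnot]; ring
      _ ≤ off v := Finset.sum_le_sum_of_subset hsub
  have hoff_top : ∀ j : Fin n, ∀ t : ℕ, t < q j → off (j : ℕ) + t < N := by
    intro j t ht
    have h1 : off (j : ℕ) + t < off (j : ℕ) + q j := by omega
    have h2 : off (j : ℕ) + q j ≤ off n := hoff_le j n j.isLt
    have h3 : off n = N := by
      simp only [hoff, hN]
      congr 1
      apply Finset.filter_true_of_mem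
      intro x _
      exact x.isLt
    omega
  -- the flattening map
  set ι : (Σ j : Fin n, Fin (q j)) → Fin N :=
    fun σ => ⟨off (σ.1 : ℕ) + (σ.2 : ℕ), hoff_top σ.1 σ.2 σ.2.isLt⟩ with hι
  have hι_lt : ∀ σ τ : (Σ j : Fin n, Fin (q j)),
      ((σ.1 : ℕ) < (τ.1 : ℕ) ∨ (σ.1 = τ.1 ∧ (σ.2 : ℕ) < (τ.2 : ℕ))) → ι σ < ι τ := by
    intro σ τ h
    rcases h with h | ⟨h1, h2⟩
    · have := hoff_le σ.1 (τ.1 : ℕ) h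
      have hσ2 : (σ.2 : ℕ) < q σ.1 := σ.2.isLt
      simp only [hι, Fin.mk_lt_mk]
      omega
    · simp only [hι, Fin.mk_lt_mk, h1]
      omega
  have hι_inj : Function.Injective ι := by
    intro σ τ h
    have hval : off (σ.1 : ℕ) + (σ.2 : ℕ) = off (τ.1 : ℕ) + (τ.2 : ℕ) := by
      simpa [hι, Fin.mk.injEq] using h
    rcases lt_trichotomy ((σ.1 : ℕ)) ((τ.1 : ℕ)) with hlt | heq | hgt
    · exact absurd (hι_lt σ τ (Or.inl hlt)) (by simp [h])
    · have hfst : σ.1 = τ.1 := Fin.ext heq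
      obtain ⟨j1, t1⟩ := σ
      obtain ⟨j2, t2⟩ := τ
      simp only at hfst
      subst hfst
      simp only at hval heq
      have : (t1 : ℕ) = (t2 : ℕ) := by omega
      simp [Fin.ext this]
    · exact absurd (hι_lt τ σ (Or.inl hgt)) (by simp [h])
  have hcard : Fintype.card (Σ j : Fin n, Fin (q j)) = Fintype.card (Fin N) := by
    simp [Fintype.card_sigma, hN]
  have hι_bij : Function.Bijective ι :=
    (Fintype.bijective_iff_injective_and_card ι).mpr ⟨hι_inj, hcard⟩
  set E : (Σ j : Fin n, Fin (q j)) ≃ Fin N := Equiv.ofBijective ι hι_bij with hE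
  -- the cluster predicate
  set S : Fin n → Finset (Fin m) := fun j => Finset.univ.filter (fun i => A i j = true) with hS
  have hScard : ∀ j, (S j).card = colOnes A j := fun j => rfl
  set e : (j : Fin n) → (Fin (colOnes A j) ≃o S j) := fun j => (S j).orderIsoOfFin (hScard j) with he
  set C : Fin n → ℕ → Fin m → Prop := fun j t i =>
    ∃ r : Fin (colOnes A j), ((e j r : Fin m) = i ∧ t * k ≤ (r : ℕ) ∧ (r : ℕ) < (t+1) * k) with hC
  set B : Matrix (Fin m) (Fin N) Bool :=
    fun i c => decide (C (E.symm c).1 ((E.symm c).2 : ℕ) i) with hB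
  have hCA : ∀ j t i, C j t i → A i j = true := by
    intro j t i ⟨r, hr, _⟩
    have : (e j r : Fin m) ∈ S j := (e j r).2
    rw [hr] at this
    simpa [hS] using this
  -- columns of B have ≥ k ones
  have hcols : ∀ c, k ≤ colOnes B c := by
    intro c
    set σ := E.symm c with hσ
    have hqk : ((σ.2 : ℕ) + 1) * k ≤ colOnes A σ.1 := by
      have h1 : (σ.2 : ℕ) + 1 ≤ q σ.1 := σ.2.isLt
      have h2 : q σ.1 * k ≤ colOnes A σ.1 := Nat.div_mul_le_self _ _
      calc ((σ.2 : ℕ) + 1) * k ≤ q σ.1 * k := Nat.mul_le_mul_right _ h1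
        _ ≤ colOnes A σ.1 := h2
    have hexp : ((σ.2 : ℕ) + 1) * k = (σ.2 : ℕ) * k + k := by ring
    have hsb : ∀ s : Fin k, (σ.2 : ℕ) * k + (s : ℕ) < colOnes A σ.1 := by
      intro s
      have := s.isLt
      omega
    set f : Fin k → Fin m := fun s => (e σ.1 ⟨(σ.2 : ℕ) * k + (s : ℕ), hsb s⟩ : Fin m) with hf
    have hmaps : ∀ s : Fin k, s ∈ Finset.univ →
        f s ∈ Finset.univ.filter (fun i : Fin m => B i c = true) := by
      intro s _
      simp only [Finset.mem_filter, Finset.mem_univ, true_and, hB, decide_eq_true_iff]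
      rw [← hσ]
      refine ⟨⟨(σ.2 : ℕ) * k + (s : ℕ), hsb s⟩, rfl, ?_, ?_⟩
      · simp only [Fin.val_mk]
        omega
      · simp only [Fin.val_mk]
        have := s.isLt
        omega
    have hfinj : Set.InjOn f (Finset.univ : Finset (Fin k)) := by
      intro s1 _ s2 _ hfs
      have : ((σ.2 : ℕ) * k + (s1 : ℕ)) = ((σ.2 : ℕ) * k + (s2 : ℕ)) := by
        have h1 : e σ.1 ⟨(σ.2 : ℕ) * k + (s1 : ℕ), hsb s1⟩ = e σ.1 ⟨(σ.2 : ℕ) * k + (s2 : ℕ), hsb s2⟩ :=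
          Subtype.ext hfs
        have h2 := (e σ.1).injective h1
        simpa [Fin.mk.injEq] using h2
      exact Fin.ext (by omega)
    calc k = (Finset.univ : Finset (Fin k)).card := by simp
      _ ≤ _ := Finset.card_le_card_of_injOn f hmaps hfinj
  -- B avoids P
  have hBavoid : ¬ Contains P B := by
    rintro ⟨ri, ci, hri, hci, hmap⟩
    set σ : Fin b → (Σ j : Fin n, Fin (q j)) := fun j => E.symm (ci j) with hσ
    have hEσ : ∀ j, ι (σ j) = ci j := fun j => E.apply_symm_apply (ci j)
    have hmono : ∀ j1 j2 : Fin b, j1 < j2 →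
        ((σ j1).1 : ℕ) < ((σ j2).1 : ℕ) ∨ ((σ j1).1 = (σ j2).1 ∧ ((σ j1).2 : ℕ) < ((σ j2).2 : ℕ)) := by
      intro j1 j2 h12
      have hc : ι (σ j1) < ι (σ j2) := by rw [hEσ, hEσ]; exact hci h12
      rcases lt_trichotomy (((σ j1).1 : ℕ)) (((σ j2).1 : ℕ)) with hlt | heq | hgt
      · exact Or.inl hlt
      · refine Or.inr ⟨Fin.ext heq, ?_⟩
        have hval : off ((σ j1).1 : ℕ) + ((σ j1).2 : ℕ) < off ((σ j2).1 : ℕ) + ((σ j2).2 : ℕ) := hc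
        rw [heq] at hval
        omega
      · exact absurd (hι_lt _ _ (Or.inl hgt)) (by exact fun h => absurd (h.trans hc) (lt_irrefl _))
    have hmapC : ∀ i j, P i j = true → C (σ j).1 ((σ j).2 : ℕ) (ri i) := by
      intro i j hPij
      have := hmap i j hPij
      simpa [hB, hσ, decide_eq_true_iff] using this
    by_cases hsm : ∀ j1 j2 : Fin b, j1 < j2 → ((σ j1).1 : ℕ) < ((σ j2).1 : ℕ)
    · apply hA
      refine ⟨ri, fun j => (σ j).1, hri, fun j1 j2 h => hsm j1 j2 h, ?_⟩
      intro i j hPij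
      exact hCA _ _ _ (hmapC i j hPij)
    · push_neg at hsm
      obtain ⟨j1, j2, h12, hng⟩ := hsm
      obtain hlt | ⟨hjeq, hteq⟩ := hmono j1 j2 h12
      · omega
      obtain ⟨i, ⟨⟨_, _, _⟩, ⟨i2, hii2, hP2⟩⟩, ⟨⟨i1', hi1'i, hP1'⟩, _⟩⟩ := hP j1 j2
      have h1 : C (σ j1).1 ((σ j1).2 : ℕ) (ri i2) := hmapC i2 j1 hP2
      have h2 : C (σ j2).1 ((σ j2).2 : ℕ) (ri i1') := hmapC i1' j2 hP1'
      generalize ht1 : ((σ j1).2 : ℕ) = t1 at h1 hteq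
      generalize ht2 : ((σ j2).2 : ℕ) = t2 at h2 hteq
      rw [hjeq] at h1
      obtain ⟨r2, hr2, _, hr2hi⟩ := h1
      obtain ⟨r1, hr1, hr1lo, _⟩ := h2
      have hrlt : (r2 : ℕ) < (r1 : ℕ) := by
        have : (t1 + 1) * k ≤ t2 * k := Nat.mul_le_mul_right _ (by omega)
        omega
      have hlt2 : (e (σ j2).1 r2 : Fin m) < (e (σ j2).1 r1 : Fin m) := by
        have := (e (σ j2).1).strictMono (show r2 < r1 from hrlt)
        exact this
      rw [hr1, hr2] at hlt2
      have hle : ri i1' ≤ ri i2 := hri.monotone (hi1'i.trans hii2)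
      exact absurd hlt2 (not_lt.mpr hle)
  -- conclude
  have hNle : (N : ℕ∞) ≤ exCols k m P := le_sSup ⟨N, rfl, B, hBavoid, hcols⟩
  have hcount : onesCount A ≤ k * (N + n) := by
    rw [onesCount_eq_sum]
    have hbound : ∀ j : Fin n, colOnes A j ≤ k * q j + (k - 1) := by
      intro j
      have h1 := Nat.div_add_mod (colOnes A j) k
      have h2 : colOnes A j % k < k := Nat.mod_lt _ hk
      simp only [hq]
      omega
    calc ∑ j, colOnes A j ≤ ∑ j : Fin n, (k * q j + (k - 1)) := Finset.sum_le_sum (fun j _ => hbound j)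
      _ = k * N + n * (k - 1) := by rw [Finset.sum_add_distrib, ← Finset.mul_sum]; simp [hN, mul_comm]
      _ ≤ k * N + n * k := by have : n * (k-1) ≤ n * k := Nat.mul_le_mul_left _ (by omega); omega
      _ = k * (N + n) := by ring
  calc (onesCount A : ℕ∞) ≤ ((k * (N + n) : ℕ) : ℕ∞) := by exact_mod_cast hcount
    _ = (k : ℕ∞) * ((N : ℕ∞) + (n : ℕ∞)) := by push_cast; ring
    _ ≤ (k : ℕ∞) * (exCols k m P + (n : ℕ∞)) := by
        exact mul_le_mul_right (add_le_add_left hNle _) _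

/-- For any range-overlapping `P` and `k ≥ 1`, `ex(m, n, P) ≤ k·(ex_k(m, P) + n)`. -/
theorem stmt_7 {a b : ℕ} (P : Matrix (Fin a) (Fin b) Bool) (hP : RangeOverlapping P)
    (k : ℕ) (hk : 1 ≤ k) (m n : ℕ) :
    ((exWeight m n P : ℕ) : ℕ∞) ≤ (k : ℕ∞) * (exCols k m P + (n : ℕ∞)) := by
  classical
  unfold exWeight
  set T := {w : ℕ | ∃ A : Matrix (Fin m) (Fin n) Bool, ¬ Contains P A ∧ onesCount A = w} with hT
  rcases T.eq_empty_or_nonempty with hemp | hne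
  · rw [hemp, csSup_empty]
    simp
  · have hbdd : BddAbove T := by
      refine ⟨m * n, ?_⟩
      rintro w ⟨A, _, rfl⟩
      calc onesCount A ≤ (Finset.univ : Finset (Fin m × Fin n)).card := Finset.card_filter_le _ _
        _ = m * n := by simp
    obtain ⟨A, hA, hw⟩ := Nat.sSup_mem hne hbdd
    rw [← hw]
    exact key P hP k hk m n A hA
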